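/- There exists a numerical constant ℓ_m ≥ 1 (independent of T) such that for all T ≥ 2, the function f̄_m(x,z) = -Ψ(1)Φ(x₁) + Σ_{i=2}^{T}[Ψ(-z_i)Φ(-x_i) - Ψ(z_i)Φ(x_i)] + 6·Σ_{i=1}^{T-1}(x_i - (1/2)·z_{i+1})², defined on ℝ^T × ℝ^{T-1}, is ℓ_m-smooth: its gradient is ℓ_m-Lipschitz with respect to the Euclidean norm. -/

import Mathlib

set_option linter.unusedSectionVars false
set_option linter.unusedVariables false
set_option maxHeartbeats 1000000

open Real Set


/-- `Ψ(x) = 0` for `x ≤ 1/2`, `exp(1 - 1/(2x-1)²)` for `x > 1/2`. -/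
noncomputable def Psi (x : ℝ) : ℝ :=
  if x ≤ 1 / 2 then 0 else Real.exp (1 - 1 / (2 * x - 1) ^ 2)

/-- `Φ(x) = √e · ∫_{-∞}^x e^{-t²/2} dt`. -/
noncomputable def Phi (x : ℝ) : ℝ :=
  Real.sqrt (Real.exp 1) * ∫ t in Set.Iic x, Real.exp (-t ^ 2 / 2)

/-- `f̄_m(x, z)` on the Euclidean space `ℝ^T × ℝ^{T-1}`.
Coordinate `Sum.inl j` is the math variable `x_{j+1}`; `Sum.inr j` is `z_{j+2}`. -/
noncomputable def fmE (T : ℕ) (hT : 2 ≤ T)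
    (w : EuclideanSpace ℝ (Fin T ⊕ Fin (T - 1))) : ℝ :=
  -Psi 1 * Phi (w (Sum.inl ⟨0, by omega⟩))
    + ∑ j : Fin (T - 1),
        (Psi (-w (Sum.inr j)) * Phi (-w (Sum.inl ⟨(j : ℕ) + 1, by have := j.isLt; omega⟩))
          - Psi (w (Sum.inr j)) * Phi (w (Sum.inl ⟨(j : ℕ) + 1, by have := j.isLt; omega⟩)))
    + 6 * ∑ j : Fin (T - 1),
        (w (Sum.inl ⟨(j : ℕ), by have := j.isLt; omega⟩) - (1 / 2) * w (Sum.inr j)) ^ 2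



noncomputable def psiD (x : ℝ) : ℝ :=
  if x ≤ 1 / 2 then 0 else Real.exp (1 - 1 / (2 * x - 1) ^ 2) * (4 / (2 * x - 1) ^ 3)

noncomputable def psiD2 (x : ℝ) : ℝ :=
  if x ≤ 1 / 2 then 0 else
    Real.exp (1 - 1 / (2 * x - 1) ^ 2) * ((16 - 24 * (2 * x - 1) ^ 2) / (2 * x - 1) ^ 6)

lemma exp_neg_inv_sq_le (u : ℝ) (hu : 0 < u) (n : ℕ) :
    Real.exp (-(1 / u ^ 2)) ≤ (Nat.factorial n : ℝ) * u ^ (2 * n) := by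
  have hs : (0:ℝ) < 1 / u ^ 2 := by positivity
  have h1 : (1 / u ^ 2) ^ n / (Nat.factorial n : ℝ) ≤ Real.exp (1 / u ^ 2) :=
    Real.pow_div_factorial_le_exp (x := 1 / u ^ 2) hs.le n
  have hfac : (0:ℝ) < (Nat.factorial n : ℝ) := by positivity
  have hb : (0:ℝ) < u ^ (2 * n) := pow_pos hu _
  have e1 : (1 / u ^ 2) ^ n = 1 / u ^ (2 * n) := by
    rw [div_pow, one_pow, ← pow_mul]
  have h2 : 1 / u ^ (2 * n) ≤ Real.exp (1 / u ^ 2) * (Nat.factorial n : ℝ) := by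
    rw [e1] at h1
    exact (div_le_iff₀ hfac).1 h1
  have h3 : 1 ≤ Real.exp (1 / u ^ 2) * (Nat.factorial n : ℝ) * u ^ (2 * n) :=
    (div_le_iff₀ hb).1 h2
  rw [Real.exp_neg, inv_eq_one_div, div_le_iff₀ (Real.exp_pos _)]
  nlinarith [Real.exp_pos (1 / u ^ 2)]

lemma exp1_lt : Real.exp 1 < 2.7182818286 := Real.exp_one_lt_d9

lemma psi_eq_of_lt {x : ℝ} (hx : 1 / 2 < x) :
    Psi x = Real.exp 1 * Real.exp (-(1 / (2 * x - 1) ^ 2)) := by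
  rw [Psi, if_neg (not_le.2 hx), ← Real.exp_add]
  ring_nf

lemma psi_nonneg (x : ℝ) : 0 ≤ Psi x := by
  unfold Psi; split
  · exact le_refl 0
  · exact (Real.exp_pos _).le

lemma hasDerivAt_zero_of_quad {f : ℝ → ℝ} {a C : ℝ} (hfa : f a = 0)
    (h : ∀ x, |f x| ≤ C * (x - a) ^ 2) : HasDerivAt f 0 a := by
  have hC : 0 ≤ C := by
    have h1 := h (a + 1)
    have h2 := abs_nonneg (f (a + 1))
    nlinarith
  rw [hasDerivAt_iff_isLittleO, Asymptotics.isLittleO_iff]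
  intro ε hε
  have hpos : 0 < ε / (C + 1) := by positivity
  filter_upwards [Metric.ball_mem_nhds a hpos] with x hx
  rw [Metric.mem_ball, Real.dist_eq] at hx
  have h2 := h x
  have h3 : (x - a) ^ 2 = |x - a| * |x - a| := by
    rw [← abs_mul, ← sq, abs_of_nonneg (sq_nonneg _)]
  have h4 : (C + 1) * (ε / (C + 1)) = ε := by field_simp
  simp only [hfa, sub_zero, smul_eq_mul, mul_zero, Real.norm_eq_abs]
  have habs : 0 ≤ |x - a| := abs_nonneg _
  calc |f x| ≤ C * (x - a) ^ 2 := h2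
    _ = C * (|x - a| * |x - a|) := by rw [h3]
    _ ≤ (C + 1) * (|x - a| * |x - a|) := by nlinarith
    _ ≤ (C + 1) * ((ε / (C + 1)) * |x - a|) := by
        have hstep : |x - a| * |x - a| ≤ (ε / (C + 1)) * |x - a| :=
          mul_le_mul_of_nonneg_right hx.le habs
        nlinarith [hstep]
    _ = ε * |x - a| := by field_simp

lemma psi_le_quad (x : ℝ) : |Psi x| ≤ 12 * (x - 1/2) ^ 2 := by
  rcases le_or_gt x (1/2) with hx | hx
  · rw [Psi, if_pos hx, abs_zero]; positivity
  · have hu : 0 < 2 * x - 1 := by linarith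
    rw [abs_of_nonneg (psi_nonneg x), psi_eq_of_lt hx]
    have h1 : Real.exp (-(1 / (2*x-1)^2)) ≤ (2*x-1)^2 := by
      calc Real.exp (-(1 / (2*x-1)^2)) ≤ (Nat.factorial 1 : ℝ) * (2*x-1)^(2*1) :=
            exp_neg_inv_sq_le (2*x-1) hu 1
        _ = (2*x-1)^2 := by norm_num [Nat.factorial]
    have he : Real.exp 1 ≤ 3 := by nlinarith [exp1_lt]
    have hE : 0 < Real.exp (-(1 / (2*x-1)^2)) := Real.exp_pos _
    have hq : (2*x-1)^2 = 4*(x-1/2)^2 := by ring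
    have := mul_le_mul he h1 hE.le (by norm_num : (0:ℝ) ≤ 3)
    linarith

lemma psiD_le_quad (x : ℝ) : |psiD x| ≤ 288 * (x - 1/2) ^ 2 := by
  rcases le_or_gt x (1/2) with hx | hx
  · rw [psiD, if_pos hx, abs_zero]; positivity
  · have hu : 0 < 2 * x - 1 := by linarith
    set u := 2 * x - 1 with hudef
    clear_value u
    have he : Real.exp 1 ≤ 3 := by nlinarith [exp1_lt]
    have hE : 0 < Real.exp (-(1 / u^2)) := Real.exp_pos _
    have hexp5 : Real.exp (-(1 / u^2)) ≤ 6 * u^5 := by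
      rcases le_or_gt u 1 with hu1 | hu1
      · have h1 := exp_neg_inv_sq_le u hu 3
        have : (Nat.factorial 3 : ℝ) = 6 := by norm_num [Nat.factorial]
        rw [this] at h1
        have : u^6 ≤ u^5 := by
          calc u^6 = u^5 * u := by ring
          _ ≤ u^5 * 1 := by nlinarith [pow_pos hu 5]
          _ = u^5 := by ring
        calc Real.exp (-(1/u^2)) ≤ 6 * u^(2*3) := h1
        _ = 6 * u^6 := by norm_num
        _ ≤ 6 * u^5 := by linarith
      · have h1 : Real.exp (-(1/u^2)) ≤ 1 := by
          rw [Real.exp_le_one_iff]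
          have : 0 < 1/u^2 := by positivity
          linarith
        have h5 : (1:ℝ) ≤ u^5 := one_le_pow₀ hu1.le
        calc Real.exp (-(1/u^2)) ≤ 1 := h1
          _ ≤ u^5 := h5
          _ ≤ 6 * u^5 := by linarith
    have heq : psiD x = Real.exp 1 * Real.exp (-(1/u^2)) * (4 / u^3) := by
      rw [psiD, if_neg (not_le.2 hx), ← hudef, ← Real.exp_add]
      ring_nf
    rw [heq, abs_of_nonneg (by positivity)]
    have hu3 : 0 < u^3 := pow_pos hu 3
    have key : Real.exp 1 * Real.exp (-(1/u^2)) * (4 / u^3) ≤ 72 * u^2 := by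
      have h72 : Real.exp 1 * Real.exp (-(1/u^2)) * (4/u^3)
          = (Real.exp 1 * Real.exp (-(1/u^2)) * 4) / u^3 := by ring
      rw [h72, div_le_iff₀ hu3]
      have hmm := mul_le_mul he hexp5 hE.le (by norm_num : (0:ℝ) ≤ 3)
      nlinarith [pow_pos hu 5]
    have : u^2 = 4 * (x - 1/2)^2 := by rw [hudef]; ring
    nlinarith

lemma psi_le (x : ℝ) : |Psi x| ≤ 3 := by
  rcases le_or_gt x (1/2) with hx | hx
  · rw [Psi, if_pos hx, abs_zero]; norm_num
  · have hu : 0 < 2 * x - 1 := by linarith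
    rw [abs_of_nonneg (psi_nonneg x), psi_eq_of_lt hx]
    have he : Real.exp 1 ≤ 3 := by nlinarith [exp1_lt]
    have h1 : Real.exp (-(1 / (2*x-1)^2)) ≤ 1 := by
      rw [Real.exp_le_one_iff]
      have : (0:ℝ) < 1/(2*x-1)^2 := by positivity
      linarith
    nlinarith [Real.exp_pos (1:ℝ), Real.exp_pos (-(1 / (2*x-1)^2))]

lemma abs_psiD_le (x : ℝ) : |psiD x| ≤ 72 := by
  rcases le_or_gt x (1/2) with hx | hx
  · rw [psiD, if_pos hx, abs_zero]; norm_num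
  · have hu : 0 < 2 * x - 1 := by linarith
    set u := 2 * x - 1 with hudef
    clear_value u
    have he : Real.exp 1 ≤ 3 := by nlinarith [exp1_lt]
    have hE : 0 < Real.exp (-(1 / u^2)) := Real.exp_pos _
    have heq : psiD x = Real.exp 1 * Real.exp (-(1/u^2)) * (4 / u^3) := by
      rw [psiD, if_neg (not_le.2 hx), ← hudef, ← Real.exp_add]; ring_nf
    have hu3 : 0 < u^3 := pow_pos hu 3
    rw [heq, abs_of_nonneg (by positivity)]
    have h72 : Real.exp 1 * Real.exp (-(1/u^2)) * (4/u^3)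
        = (Real.exp 1 * Real.exp (-(1/u^2)) * 4) / u^3 := by ring
    rw [h72, div_le_iff₀ hu3]
    rcases le_or_gt u 1 with hu1 | hu1
    · have h6 : Real.exp (-(1/u^2)) ≤ 6 * u^6 := by
        calc Real.exp (-(1/u^2)) ≤ (Nat.factorial 3 : ℝ) * u^(2*3) := exp_neg_inv_sq_le u hu 3
          _ = 6 * u^6 := by norm_num [Nat.factorial]
      have h8 : u^6 ≤ u^3 := by
        have := pow_le_pow_of_le_one hu.le hu1 (show 3 ≤ 6 by norm_num)
        linarith
      have hEe : Real.exp 1 * Real.exp (-(1/u^2)) ≤ 18 * u^6 :=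
        by nlinarith [mul_le_mul he h6 hE.le (by norm_num : (0:ℝ) ≤ 3)]
      calc Real.exp 1 * Real.exp (-(1/u^2)) * 4 ≤ 18 * u^6 * 4 := by linarith
        _ = 72 * u^6 := by ring
        _ ≤ 72 * u^3 := by linarith
    · have h1 : Real.exp (-(1/u^2)) ≤ 1 := by
        rw [Real.exp_le_one_iff]
        have : (0:ℝ) < 1/u^2 := by positivity
        linarith
      have h3 : (1:ℝ) ≤ u^3 := one_le_pow₀ hu1.le
      have h1e : Real.exp 1 * Real.exp (-(1/u^2)) ≤ 3 :=
        by nlinarith [mul_le_mul he h1 hE.le (by norm_num : (0:ℝ) ≤ 3)]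
      calc Real.exp 1 * Real.exp (-(1/u^2)) * 4 ≤ 3 * 4 := by linarith
        _ ≤ 72 * u^3 := by linarith

lemma abs_psiD2_le (x : ℝ) : |psiD2 x| ≤ 2880 := by
  rcases le_or_gt x (1/2) with hx | hx
  · rw [psiD2, if_pos hx, abs_zero]; norm_num
  · have hu : 0 < 2 * x - 1 := by linarith
    set u := 2 * x - 1 with hudef
    clear_value u
    have he : Real.exp 1 ≤ 3 := by nlinarith [exp1_lt]
    have hE : 0 < Real.exp (-(1 / u^2)) := Real.exp_pos _
    have hu6 : 0 < u^6 := pow_pos hu 6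
    have heq : psiD2 x = Real.exp 1 * Real.exp (-(1/u^2)) * ((16 - 24*u^2) / u^6) := by
      rw [psiD2, if_neg (not_le.2 hx), ← hudef, ← Real.exp_add]; ring_nf
    have habs : |psiD2 x| ≤ Real.exp 1 * Real.exp (-(1/u^2)) * ((16 + 24*u^2) / u^6) := by
      rw [heq, abs_mul, abs_of_nonneg (by positivity : (0:ℝ) ≤ Real.exp 1 * Real.exp (-(1/u^2))),
        abs_div, abs_of_nonneg hu6.le]
      have h1 : |16 - 24*u^2| ≤ 16 + 24*u^2 :=
        abs_le.2 ⟨by nlinarith [sq_nonneg u], by nlinarith [sq_nonneg u]⟩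
      gcongr
    refine habs.trans ?_
    rw [show Real.exp 1 * Real.exp (-(1/u^2)) * ((16 + 24*u^2)/u^6)
        = (Real.exp 1 * Real.exp (-(1/u^2)) * (16 + 24*u^2))/u^6 from by ring,
      div_le_iff₀ hu6]
    rcases le_or_gt u 1 with hu1 | hu1
    · have h24 : Real.exp (-(1/u^2)) ≤ 24 * u^8 := by
        calc Real.exp (-(1/u^2)) ≤ (Nat.factorial 4 : ℝ) * u^(2*4) := exp_neg_inv_sq_le u hu 4
          _ = 24 * u^8 := by norm_num [Nat.factorial]
      have hEe : Real.exp 1 * Real.exp (-(1/u^2)) ≤ 72 * u^8 :=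
        by nlinarith [mul_le_mul he h24 hE.le (by norm_num : (0:ℝ) ≤ 3)]
      have hp8 : u^8 ≤ u^6 := by
        have := pow_le_pow_of_le_one hu.le hu1 (show 6 ≤ 8 by norm_num)
        linarith
      have hp10 : u^10 ≤ u^6 := by
        have := pow_le_pow_of_le_one hu.le hu1 (show 6 ≤ 10 by norm_num)
        linarith
      have step := mul_le_mul_of_nonneg_right hEe (by positivity : (0:ℝ) ≤ 16 + 24*u^2)
      calc Real.exp 1 * Real.exp (-(1/u^2)) * (16 + 24*u^2)
          ≤ 72 * u^8 * (16 + 24*u^2) := step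
        _ = 1152 * u^8 + 1728 * (u^8 * u^2) := by ring
        _ = 1152 * u^8 + 1728 * u^10 := by ring
        _ ≤ 1152 * u^6 + 1728 * u^6 := by linarith
        _ = 2880 * u^6 := by ring
    · have h1 : Real.exp (-(1/u^2)) ≤ 1 := by
        rw [Real.exp_le_one_iff]
        have : (0:ℝ) < 1/u^2 := by positivity
        linarith
      have h4 : (1:ℝ) ≤ u^4 := one_le_pow₀ hu1.le
      have h6 : (1:ℝ) ≤ u^6 := one_le_pow₀ hu1.le
      have h26 : u^2 ≤ u^6 := pow_le_pow_right₀ hu1.le (by norm_num)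
      have h1e : Real.exp 1 * Real.exp (-(1/u^2)) ≤ 3 :=
        by nlinarith [mul_le_mul he h1 hE.le (by norm_num : (0:ℝ) ≤ 3)]
      have step := mul_le_mul_of_nonneg_right h1e (by positivity : (0:ℝ) ≤ 16 + 24*u^2)
      calc Real.exp 1 * Real.exp (-(1/u^2)) * (16 + 24*u^2)
          ≤ 3 * (16 + 24*u^2) := step
        _ = 48 + 72 * u^2 := by ring
        _ ≤ 48 * u^6 + 72 * u^6 := by nlinarith
        _ ≤ 2880 * u^6 := by nlinarith

lemma hasDerivAt_2x1 (x : ℝ) : HasDerivAt (fun y : ℝ => 2 * y - 1) 2 x := by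
  simpa using ((hasDerivAt_id x).const_mul (2:ℝ)).sub_const 1

lemma hasDerivAt_E {x : ℝ} (hx : 1/2 < x) :
    HasDerivAt (fun y => Real.exp (1 - 1/(2*y-1)^2))
      (Real.exp (1 - 1/(2*x-1)^2) * (4/(2*x-1)^3)) x := by
  have hu : 0 < 2*x-1 := by linarith
  have hune : (2*x-1) ≠ 0 := ne_of_gt hu
  have h1 : HasDerivAt (fun y : ℝ => (2*y-1)^2) ((2:ℕ) * (2*x-1)^1 * 2) x :=
    (hasDerivAt_2x1 x).pow 2
  have h2 := h1.inv (pow_ne_zero 2 hune)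
  have h3 := h2.const_sub 1
  have h4 : HasDerivAt (fun y : ℝ => 1 - 1/(2*y-1)^2) (4/(2*x-1)^3) x := by
    simp only [one_div]
    refine h3.congr_deriv ?_
    field_simp
    ring
  exact h4.exp

lemma hasDerivAt_R {x : ℝ} (hx : 1/2 < x) :
    HasDerivAt (fun y : ℝ => 4/(2*y-1)^3) (-24/(2*x-1)^4) x := by
  have hu : 0 < 2*x-1 := by linarith
  have hune : (2*x-1) ≠ 0 := ne_of_gt hu
  have h1 : HasDerivAt (fun y : ℝ => (2*y-1)^3) ((3:ℕ) * (2*x-1)^2 * 2) x :=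
    (hasDerivAt_2x1 x).pow 3
  have h2 := h1.inv (pow_ne_zero 3 hune)
  have h3 := h2.const_mul (4:ℝ)
  simp only [div_eq_mul_inv]
  refine h3.congr_deriv ?_
  field_simp
  ring

lemma psi_half : Psi (1/2) = 0 := by rw [Psi, if_pos le_rfl]
lemma psiD_half : psiD (1/2) = 0 := by rw [psiD, if_pos le_rfl]
lemma psiD2_half : psiD2 (1/2) = 0 := by rw [psiD2, if_pos le_rfl]

lemma hasDerivAt_psi (x : ℝ) : HasDerivAt Psi (psiD x) x := by
  rcases lt_trichotomy x (1/2) with hx | hx | hx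
  · have h0 : psiD x = 0 := by rw [psiD, if_pos hx.le]
    rw [h0]
    apply (hasDerivAt_const x (0:ℝ)).congr_of_eventuallyEq
    filter_upwards [Iio_mem_nhds hx] with y hy
    rw [Psi, if_pos (le_of_lt hy)]
  · subst hx
    rw [psiD_half]
    exact hasDerivAt_zero_of_quad psi_half psi_le_quad
  · have h0 : psiD x = Real.exp (1 - 1/(2*x-1)^2) * (4/(2*x-1)^3) := by
      rw [psiD, if_neg (not_le.2 hx)]
    rw [h0]
    apply (hasDerivAt_E hx).congr_of_eventuallyEq
    filter_upwards [Ioi_mem_nhds hx] with y hy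
    rw [Psi, if_neg (not_le.2 hy)]

lemma hasDerivAt_psiD (x : ℝ) : HasDerivAt psiD (psiD2 x) x := by
  rcases lt_trichotomy x (1/2) with hx | hx | hx
  · have h0 : psiD2 x = 0 := by rw [psiD2, if_pos hx.le]
    rw [h0]
    apply (hasDerivAt_const x (0:ℝ)).congr_of_eventuallyEq
    filter_upwards [Iio_mem_nhds hx] with y hy
    rw [psiD, if_pos (le_of_lt hy)]
  · subst hx
    rw [psiD2_half]
    exact hasDerivAt_zero_of_quad psiD_half psiD_le_quad
  · have hu : 0 < 2*x-1 := by linarith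
    have hune : (2*x-1) ≠ 0 := ne_of_gt hu
    have h0 : psiD2 x = Real.exp (1 - 1/(2*x-1)^2) * ((16 - 24*(2*x-1)^2)/(2*x-1)^6) := by
      rw [psiD2, if_neg (not_le.2 hx)]
    rw [h0]
    have hprod := (hasDerivAt_E hx).mul (hasDerivAt_R hx)
    have heq : Real.exp (1 - 1/(2*x-1)^2) * (4/(2*x-1)^3) * (4/(2*x-1)^3)
        + Real.exp (1 - 1/(2*x-1)^2) * (-24/(2*x-1)^4)
        = Real.exp (1 - 1/(2*x-1)^2) * ((16 - 24*(2*x-1)^2)/(2*x-1)^6) := by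
      field_simp
      ring
    rw [← heq]
    apply hprod.congr_of_eventuallyEq
    filter_upwards [Ioi_mem_nhds hx] with y hy
    rw [psiD, if_neg (not_le.2 hy)]; rfl

lemma real_lip {f f' : ℝ → ℝ} {C : ℝ} (hC : 0 ≤ C)
    (hf : ∀ x, HasDerivAt f (f' x) x) (hb : ∀ x, |f' x| ≤ C) (a b : ℝ) :
    |f a - f b| ≤ C * |a - b| := by
  have hL : LipschitzWith (Real.toNNReal C) f := by
    apply lipschitzWith_of_nnnorm_deriv_le (fun x => (hf x).differentiableAt)
    intro x
    rw [(hf x).deriv, ← NNReal.coe_le_coe]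
    simpa [Real.norm_eq_abs, Real.coe_toNNReal _ hC] using hb x
  have := hL.dist_le_mul a b
  simpa [Real.dist_eq, Real.coe_toNNReal _ hC] using this

lemma psi_lip (a b : ℝ) : |Psi a - Psi b| ≤ 72 * |a - b| :=
  real_lip (by norm_num) hasDerivAt_psi abs_psiD_le a b

lemma psiD_lip (a b : ℝ) : |psiD a - psiD b| ≤ 2880 * |a - b| :=
  real_lip (by norm_num) hasDerivAt_psiD abs_psiD2_le a b

noncomputable def phiD (x : ℝ) : ℝ := Real.sqrt (Real.exp 1) * Real.exp (-x ^ 2 / 2)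

lemma gauss_integrable : MeasureTheory.Integrable (fun t : ℝ => Real.exp (-t ^ 2 / 2)) := by
  have := integrable_exp_neg_mul_sq (show (0:ℝ) < 1/2 by norm_num)
  convert this using 2 with t
  ring_nf

lemma gauss_cont : Continuous (fun t : ℝ => Real.exp (-t ^ 2 / 2)) := by
  continuity

lemma sqrt_e_le : Real.sqrt (Real.exp 1) ≤ 2 := by
  rw [show (2:ℝ) = Real.sqrt 4 by rw [show (4:ℝ) = 2^2 by norm_num, Real.sqrt_sq]; norm_num]
  apply Real.sqrt_le_sqrt
  nlinarith [exp1_lt]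

lemma sqrt_e_nonneg : 0 ≤ Real.sqrt (Real.exp 1) := Real.sqrt_nonneg _

lemma hasDerivAt_phi (x : ℝ) : HasDerivAt Phi (phiD x) x := by
  have hint : ∀ y : ℝ, MeasureTheory.IntegrableOn (fun t : ℝ => Real.exp (-t ^ 2 / 2)) (Iic y) :=
    fun y => gauss_integrable.integrableOn
  have key : ∀ y : ℝ, (∫ t in Set.Iic y, Real.exp (-t ^ 2 / 2))
      = (∫ t in Set.Iic (0:ℝ), Real.exp (-t ^ 2 / 2)) + ∫ t in (0:ℝ)..y, Real.exp (-t ^ 2 / 2) := by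
    intro y
    have := intervalIntegral.integral_Iic_sub_Iic (hint 0) (hint y)
    linarith
  have hd : HasDerivAt (fun y => ∫ t in (0:ℝ)..y, Real.exp (-t ^ 2 / 2))
      (Real.exp (-x ^ 2 / 2)) x := by
    apply intervalIntegral.integral_hasDerivAt_right
      (gauss_integrable.intervalIntegrable)
      (gauss_cont.stronglyMeasurableAtFilter _ _)
      (gauss_cont.continuousAt)
  have hd2 : HasDerivAt (fun y => (∫ t in Set.Iic (0:ℝ), Real.exp (-t ^ 2 / 2))
      + ∫ t in (0:ℝ)..y, Real.exp (-t ^ 2 / 2)) (Real.exp (-x ^ 2 / 2)) x := hd.const_add _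
  have hd3 : HasDerivAt (fun y => ∫ t in Set.Iic y, Real.exp (-t ^ 2 / 2))
      (Real.exp (-x ^ 2 / 2)) x := by
    apply hd2.congr_of_eventuallyEq
    filter_upwards with y
    rw [key y]
  have := hd3.const_mul (Real.sqrt (Real.exp 1))
  exact this

lemma abs_phiD_le (x : ℝ) : |phiD x| ≤ 2 := by
  rw [phiD, abs_mul, abs_of_nonneg sqrt_e_nonneg, abs_of_nonneg (Real.exp_pos _).le]
  have h1 : Real.exp (-x ^ 2 / 2) ≤ 1 := by
    rw [Real.exp_le_one_iff]
    nlinarith [sq_nonneg x]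
  nlinarith [sqrt_e_nonneg, sqrt_e_le, Real.exp_pos (-x^2/2)]

lemma phi_le (x : ℝ) : |Phi x| ≤ 6 := by
  have h0 : 0 ≤ ∫ t in Set.Iic x, Real.exp (-t ^ 2 / 2) :=
    MeasureTheory.setIntegral_nonneg measurableSet_Iic (fun t _ => (Real.exp_pos _).le)
  have h1 : (∫ t in Set.Iic x, Real.exp (-t ^ 2 / 2)) ≤ ∫ t : ℝ, Real.exp (-t ^ 2 / 2) :=
    MeasureTheory.setIntegral_le_integral gauss_integrable
      (Filter.Eventually.of_forall (fun t => (Real.exp_pos _).le))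
  have h2 : (∫ t : ℝ, Real.exp (-t ^ 2 / 2)) = Real.sqrt (Real.pi / (1/2)) := by
    rw [← integral_gaussian (1/2)]
    congr 1 with t
    ring_nf
  have h3 : Real.sqrt (Real.pi / (1/2)) ≤ 3 := by
    rw [show (3:ℝ) = Real.sqrt 9 by rw [show (9:ℝ) = 3^2 by norm_num, Real.sqrt_sq]; norm_num]
    apply Real.sqrt_le_sqrt
    nlinarith [Real.pi_lt_d2]
  rw [Phi, abs_mul, abs_of_nonneg sqrt_e_nonneg, abs_of_nonneg h0]
  nlinarith [sqrt_e_nonneg, sqrt_e_le]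

lemma hasDerivAt_phiD (x : ℝ) :
    HasDerivAt phiD (Real.sqrt (Real.exp 1) * (Real.exp (-x ^ 2 / 2) * (-x))) x := by
  have h1 : HasDerivAt (fun y : ℝ => -y ^ 2 / 2) (-x) x := by
    have := ((hasDerivAt_pow 2 x).neg).div_const 2
    refine this.congr_deriv ?_
    push_cast
    ring
  exact (h1.exp.const_mul _)

lemma abs_phiD2_le (x : ℝ) :
    |Real.sqrt (Real.exp 1) * (Real.exp (-x ^ 2 / 2) * (-x))| ≤ 2 := by
  rw [abs_mul, abs_of_nonneg sqrt_e_nonneg, abs_mul, abs_of_nonneg (Real.exp_pos _).le, abs_neg]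
  have key : Real.exp (-x ^ 2 / 2) * |x| ≤ 1 := by
    have h1 : |x| ≤ Real.exp (x ^ 2 / 2) := by
      have := Real.add_one_le_exp (x ^ 2 / 2)
      nlinarith [sq_abs x, sq_nonneg (|x| - 1), abs_nonneg x]
    have h2 : Real.exp (-x ^ 2 / 2) = (Real.exp (x ^ 2 / 2))⁻¹ := by
      rw [← Real.exp_neg]; ring_nf
    rw [h2]
    rw [inv_mul_le_iff₀ (Real.exp_pos _)]
    simpa using h1
  nlinarith [sqrt_e_le, sqrt_e_nonneg, Real.exp_pos (-x^2/2), abs_nonneg x,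
    mul_nonneg (Real.exp_pos (-x^2/2)).le (abs_nonneg x)]

lemma phi_lip (a b : ℝ) : |Phi a - Phi b| ≤ 2 * |a - b| :=
  real_lip (by norm_num) hasDerivAt_phi abs_phiD_le a b

lemma phiD_lip (a b : ℝ) : |phiD a - phiD b| ≤ 2 * |a - b| :=
  real_lip (by norm_num) hasDerivAt_phiD abs_phiD2_le a b


variable {ι : Type*} [Fintype ι] [DecidableEq ι]

local notation "E" => EuclideanSpace ℝ ι

lemma smul_single' (c : ℝ) (i : ι) (a : ℝ) :
    c • (EuclideanSpace.single i a : E) = EuclideanSpace.single i (c * a) := by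
  ext k
  simp only [PiLp.smul_apply, EuclideanSpace.single_apply, smul_eq_mul]
  split <;> simp

lemma single_sub' (i : ι) (a b : ℝ) :
    (EuclideanSpace.single i a : E) - EuclideanSpace.single i b
      = EuclideanSpace.single i (a - b) := by
  ext k
  simp only [PiLp.sub_apply, EuclideanSpace.single_apply]
  split <;> simp

lemma inner_single_single (i k : ι) (a b : ℝ) :
    (inner ℝ (EuclideanSpace.single i a : E) (EuclideanSpace.single k b) : ℝ)
      = if i = k then a * b else 0 := by
  rw [EuclideanSpace.inner_single_left, EuclideanSpace.single_apply]
  by_cases h : i = k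
  · subst h; simp
  · rw [if_neg h, if_neg h, mul_zero]

lemma norm_sq_eq' (x : E) : ‖x‖ ^ 2 = ∑ i, (x i) ^ 2 := by
  rw [EuclideanSpace.norm_eq, Real.sq_sqrt]
  · simp [Real.norm_eq_abs, sq_abs]
  · positivity

lemma coord_abs_le_norm (x : E) (i : ι) : |x i| ≤ ‖x‖ := by
  have h1 : (x i) ^ 2 ≤ ‖x‖ ^ 2 := by
    rw [norm_sq_eq']
    exact Finset.single_le_sum (f := fun k => (x k) ^ 2) (fun k _ => sq_nonneg _)
      (Finset.mem_univ i)
  nlinarith [abs_nonneg (x i), norm_nonneg x, sq_abs (x i)]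

lemma sum_sq_comp_le {κ : Type*} [Fintype κ] (e : κ → ι) (he : Function.Injective e)
    (x : E) : ∑ j, (x (e j)) ^ 2 ≤ ‖x‖ ^ 2 := by
  rw [norm_sq_eq']
  have him : ∑ j : κ, (x (e j)) ^ 2 = ∑ i ∈ Finset.univ.image e, (x i) ^ 2 :=
    (Finset.sum_image (f := fun i => (x i) ^ 2) (g := e) (fun a _ b _ h => he h)).symm
  rw [him]
  exact Finset.sum_le_sum_of_subset_of_nonneg (Finset.subset_univ _)
    (fun i _ _ => sq_nonneg _)

lemma norm_sq_sum_orthogonal {κ : Type*} [Fintype κ] (v : κ → E)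
    (h : ∀ i j : κ, i ≠ j → (inner ℝ (v i) (v j) : ℝ) = 0) :
    ‖∑ j, v j‖ ^ 2 = ∑ j, ‖v j‖ ^ 2 := by
  have h1 : (inner ℝ (∑ i, v i) (∑ j, v j) : ℝ) = ∑ i, ∑ j, (inner ℝ (v i) (v j) : ℝ) := by
    rw [sum_inner]
    exact Finset.sum_congr rfl fun i _ => inner_sum _ _ _
  have h2 : ∀ i : κ, (∑ j, (inner ℝ (v i) (v j) : ℝ)) = ‖v i‖ ^ 2 := by
    intro i
    rw [Finset.sum_eq_single i (fun j _ hj => h i j (Ne.symm hj)) (by simp)]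
    exact real_inner_self_eq_norm_sq _
  rw [← real_inner_self_eq_norm_sq, h1]
  exact Finset.sum_congr rfl fun i _ => h2 i

section gradientRules

lemma HasGradientAt.add'' {f g : E → ℝ} {a b : E} {x : E}
    (hf : HasGradientAt f a x) (hg : HasGradientAt g b x) :
    HasGradientAt (fun v => f v + g v) (a + b) x := by
  rw [hasGradientAt_iff_hasFDerivAt] at *
  refine (hf.add hg).congr_fderiv ?_
  simp [map_add]

lemma HasGradientAt.sub'' {f g : E → ℝ} {a b : E} {x : E}
    (hf : HasGradientAt f a x) (hg : HasGradientAt g b x) :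
    HasGradientAt (fun v => f v - g v) (a - b) x := by
  rw [hasGradientAt_iff_hasFDerivAt] at *
  refine (hf.sub hg).congr_fderiv ?_
  simp [map_sub]

lemma HasGradientAt.const_mul'' {f : E → ℝ} {a : E} {x : E} (c : ℝ)
    (hf : HasGradientAt f a x) :
    HasGradientAt (fun v => c * f v) (c • a) x := by
  rw [hasGradientAt_iff_hasFDerivAt] at *
  simpa [map_smul] using hf.const_mul c

lemma HasGradientAt.mul'' {f g : E → ℝ} {a b : E} {x : E}
    (hf : HasGradientAt f a x) (hg : HasGradientAt g b x) :
    HasGradientAt (fun v => f v * g v) (f x • b + g x • a) x := by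
  rw [hasGradientAt_iff_hasFDerivAt] at *
  refine (hf.mul hg).congr_fderiv ?_
  simp [map_add, map_smul]

lemma hasGradientAt_sum {κ : Type*} [Fintype κ] {f : κ → E → ℝ} {g : κ → E} {x : E}
    (h : ∀ j : κ, HasGradientAt (f j) (g j) x) :
    HasGradientAt (fun v => ∑ j, f j v) (∑ j, g j) x := by
  rw [hasGradientAt_iff_hasFDerivAt]
  have := HasFDerivAt.fun_sum (fun j (_ : j ∈ Finset.univ) =>
    (hasGradientAt_iff_hasFDerivAt.1 (h j)))
  simpa [map_sum] using this

lemma hasGradientAt_comp_proj {φ : ℝ → ℝ} {d : ℝ} {i : ι} {w : E}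
    (hφ : HasDerivAt φ d (w i)) :
    HasGradientAt (fun v : E => φ (v i)) (EuclideanSpace.single i d) w := by
  rw [hasGradientAt_iff_hasFDerivAt]
  have hp : HasFDerivAt (fun v : E => v i) ((EuclideanSpace.proj i : E →L[ℝ] ℝ)) w := by
    exact (EuclideanSpace.proj i : E →L[ℝ] ℝ).hasFDerivAt
  have h1 : HasFDerivAt (fun v : E => φ (v i)) (d • (EuclideanSpace.proj i : E →L[ℝ] ℝ)) w :=
    hφ.comp_hasFDerivAt w hp
  refine h1.congr_fderiv ?_
  ext v
  simp [InnerProductSpace.toDual_apply_apply, EuclideanSpace.inner_single_left]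

end gradientRules
namespace Stmt14

abbrev ET (T : ℕ) := EuclideanSpace ℝ (Fin T ⊕ Fin (T - 1))

@[reducible] def i0 (T : ℕ) (hT : 2 ≤ T) : Fin T := ⟨0, by omega⟩
@[reducible] def ia (T : ℕ) (j : Fin (T - 1)) : Fin T := ⟨(j : ℕ), by have := j.isLt; omega⟩
@[reducible] def ib (T : ℕ) (j : Fin (T - 1)) : Fin T :=
  ⟨(j : ℕ) + 1, by have := j.isLt; omega⟩

noncomputable def Aj (T : ℕ) (j : Fin (T - 1)) (w : ET T) : ℝ :=
  Phi (-w (Sum.inl (ib T j))) * (-psiD (-w (Sum.inr j)))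
    - Phi (w (Sum.inl (ib T j))) * psiD (w (Sum.inr j))

noncomputable def Bj (T : ℕ) (j : Fin (T - 1)) (w : ET T) : ℝ :=
  Psi (-w (Sum.inr j)) * (-phiD (-w (Sum.inl (ib T j))))
    - Psi (w (Sum.inr j)) * phiD (w (Sum.inl (ib T j)))

noncomputable def dj (T : ℕ) (j : Fin (T - 1)) (w : ET T) : ℝ :=
  w (Sum.inl (ia T j)) - 1 / 2 * w (Sum.inr j)

noncomputable def gradG (T : ℕ) (hT : 2 ≤ T) (w : ET T) : ET T :=
  EuclideanSpace.single (Sum.inl (i0 T hT)) (-Psi 1 * phiD (w (Sum.inl (i0 T hT))))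
  + ∑ j : Fin (T - 1), (EuclideanSpace.single (Sum.inl (ib T j)) (Bj T j w)
        + EuclideanSpace.single (Sum.inr j) (Aj T j w))
  + (6 : ℝ) • ∑ j : Fin (T - 1),
      (EuclideanSpace.single (Sum.inl (ia T j)) (2 * dj T j w)
        - EuclideanSpace.single (Sum.inr j) (dj T j w))

lemma hasDerivAt_psi_neg (z : ℝ) : HasDerivAt (fun t : ℝ => Psi (-t)) (-psiD (-z)) z := by
  have h := (hasDerivAt_psi (-z)).comp z (hasDerivAt_neg z)
  simpa [Function.comp_def] using h

lemma hasDerivAt_phi_neg (z : ℝ) : HasDerivAt (fun t : ℝ => Phi (-t)) (-phiD (-z)) z := by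
  have h := (hasDerivAt_phi (-z)).comp z (hasDerivAt_neg z)
  simpa [Function.comp_def] using h

lemma hasGradientAt_fmE (T : ℕ) (hT : 2 ≤ T) (w : ET T) :
    HasGradientAt (fmE T hT) (gradG T hT w) w := by
  have h1 : HasGradientAt (fun v : ET T => -Psi 1 * Phi (v (Sum.inl (i0 T hT))))
      (EuclideanSpace.single (Sum.inl (i0 T hT))
        (-Psi 1 * phiD (w (Sum.inl (i0 T hT))))) w := by
    have hp : HasGradientAt (fun v : ET T => Phi (v (Sum.inl (i0 T hT))))
        (EuclideanSpace.single (Sum.inl (i0 T hT)) (phiD (w (Sum.inl (i0 T hT))))) w :=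
      hasGradientAt_comp_proj (hasDerivAt_phi _)
    have := hp.const_mul'' (-Psi 1)
    rwa [smul_single'] at this
  have hS : ∀ j : Fin (T - 1), HasGradientAt
      (fun v : ET T => Psi (-v (Sum.inr j)) * Phi (-v (Sum.inl (ib T j)))
        - Psi (v (Sum.inr j)) * Phi (v (Sum.inl (ib T j))))
      (EuclideanSpace.single (Sum.inl (ib T j)) (Bj T j w)
        + EuclideanSpace.single (Sum.inr j) (Aj T j w)) w := by
    intro j
    have hA1 : HasGradientAt (fun v : ET T => Psi (-v (Sum.inr j)))
        (EuclideanSpace.single (Sum.inr j) (-psiD (-w (Sum.inr j)))) w :=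
      hasGradientAt_comp_proj (hasDerivAt_psi_neg _)
    have hB1 : HasGradientAt (fun v : ET T => Phi (-v (Sum.inl (ib T j))))
        (EuclideanSpace.single (Sum.inl (ib T j)) (-phiD (-w (Sum.inl (ib T j))))) w :=
      hasGradientAt_comp_proj (hasDerivAt_phi_neg _)
    have hA2 : HasGradientAt (fun v : ET T => Psi (v (Sum.inr j)))
        (EuclideanSpace.single (Sum.inr j) (psiD (w (Sum.inr j)))) w :=
      hasGradientAt_comp_proj (hasDerivAt_psi _)
    have hB2 : HasGradientAt (fun v : ET T => Phi (v (Sum.inl (ib T j))))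
        (EuclideanSpace.single (Sum.inl (ib T j)) (phiD (w (Sum.inl (ib T j))))) w :=
      hasGradientAt_comp_proj (hasDerivAt_phi _)
    have hp1 := hA1.mul'' hB1
    have hp2 := hA2.mul'' hB2
    have hsub := hp1.sub'' hp2
    convert hsub using 1
    ext k
    simp only [Aj, Bj, PiLp.add_apply, PiLp.sub_apply, PiLp.smul_apply,
      EuclideanSpace.single_apply, smul_eq_mul]
    split_ifs <;> ring
  have hQ : HasGradientAt
      (fun v : ET T => 6 * ∑ j : Fin (T - 1),
        (v (Sum.inl (ia T j)) - 1 / 2 * v (Sum.inr j)) ^ 2)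
      ((6 : ℝ) • ∑ j : Fin (T - 1),
        (EuclideanSpace.single (Sum.inl (ia T j)) (2 * dj T j w)
          - EuclideanSpace.single (Sum.inr j) (dj T j w))) w := by
    have hq : ∀ j : Fin (T - 1), HasGradientAt
        (fun v : ET T => (v (Sum.inl (ia T j)) - 1 / 2 * v (Sum.inr j)) ^ 2)
        (EuclideanSpace.single (Sum.inl (ia T j)) (2 * dj T j w)
          - EuclideanSpace.single (Sum.inr j) (dj T j w)) w := by
      intro j
      have hl1 : HasGradientAt (fun v : ET T => v (Sum.inl (ia T j)))
          (EuclideanSpace.single (Sum.inl (ia T j)) (1 : ℝ)) w :=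
        hasGradientAt_comp_proj (hasDerivAt_id _)
      have hl2 : HasGradientAt (fun v : ET T => 1 / 2 * v (Sum.inr j))
          (EuclideanSpace.single (Sum.inr j) (1 / 2 : ℝ)) w := by
        have : HasDerivAt (fun t : ℝ => 1 / 2 * t) (1 / 2) (w (Sum.inr j)) := by
          simpa using (hasDerivAt_id (w (Sum.inr j))).const_mul (1 / 2 : ℝ)
        exact hasGradientAt_comp_proj this
      have hl := hl1.sub'' hl2
      have hsq := hl.mul'' hl
      have hfun : (fun v : ET T => (v (Sum.inl (ia T j)) - 1 / 2 * v (Sum.inr j)) ^ 2)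
          =ᶠ[nhds w] (fun v : ET T => (v (Sum.inl (ia T j)) - 1 / 2 * v (Sum.inr j))
            * (v (Sum.inl (ia T j)) - 1 / 2 * v (Sum.inr j))) :=
        Filter.Eventually.of_forall (fun v => by ring)
      have := hsq.congr_of_eventuallyEq hfun
      convert this using 1
      ext k
      simp only [dj, PiLp.add_apply, PiLp.sub_apply, PiLp.smul_apply,
        EuclideanSpace.single_apply, smul_eq_mul]
      split_ifs <;> ring
    have hsum := hasGradientAt_sum hq
    exact hsum.const_mul'' 6
  have hfin := (h1.add'' (hasGradientAt_sum hS)).add'' hQ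
  exact hfin

end Stmt14

namespace Stmt14

lemma le_of_sq_le_sq' {a b : ℝ} (ha : 0 ≤ a) (hb : 0 ≤ b) (h : a ^ 2 ≤ b ^ 2) : a ≤ b := by
  nlinarith

lemma abs_mul_sub_mul (p p' q q' : ℝ) :
    |p * q - p' * q'| ≤ |p| * |q - q'| + |q'| * |p - p'| := by
  have h : p * q - p' * q' = p * (q - q') + q' * (p - p') := by ring
  rw [h]
  refine (abs_add_le _ _).trans ?_
  rw [abs_mul, abs_mul]

lemma inl_ib_inj (T : ℕ) :
    Function.Injective (fun j : Fin (T - 1) => (Sum.inl (ib T j) : Fin T ⊕ Fin (T - 1))) := by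
  intro a b h
  simp only [Sum.inl.injEq] at h
  have : (a : ℕ) + 1 = (b : ℕ) + 1 := congrArg Fin.val h
  exact Fin.ext (by omega)

lemma inl_ia_inj (T : ℕ) :
    Function.Injective (fun j : Fin (T - 1) => (Sum.inl (ia T j) : Fin T ⊕ Fin (T - 1))) := by
  intro a b h
  simp only [Sum.inl.injEq] at h
  have hval : (ia T a).val = (ia T b).val := congrArg Fin.val h
  simp only [ia] at hval
  exact Fin.ext (by omega)

lemma Aj_diff (T : ℕ) (j : Fin (T - 1)) (u v : ET T) :
    |Aj T j u - Aj T j v| ≤ 34560 * |u (Sum.inr j) - v (Sum.inr j)|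
      + 288 * |u (Sum.inl (ib T j)) - v (Sum.inl (ib T j))| := by
  set zu := u (Sum.inr j) with hzu
  set zv := v (Sum.inr j) with hzv
  set xu := u (Sum.inl (ib T j)) with hxu
  set xv := v (Sum.inl (ib T j)) with hxv
  have e1 : Aj T j u - Aj T j v
      = (Phi (-xu) * (-psiD (-zu)) - Phi (-xv) * (-psiD (-zv)))
        - (Phi xu * psiD zu - Phi xv * psiD zv) := by
    simp only [Aj]
    ring
  have t1 := abs_mul_sub_mul (Phi (-xu)) (Phi (-xv)) (-psiD (-zu)) (-psiD (-zv))
  have t2 := abs_mul_sub_mul (Phi xu) (Phi xv) (psiD zu) (psiD zv)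
  have hb1 : |Phi (-xu)| ≤ 6 := phi_le _
  have hb2 : |(-psiD (-zv))| ≤ 72 := by rw [abs_neg]; exact abs_psiD_le _
  have hq1 : |(-psiD (-zu)) - (-psiD (-zv))| ≤ 2880 * |zu - zv| := by
    have h := psiD_lip (-zv) (-zu)
    rw [show (-zv) - (-zu) = zu - zv by ring] at h
    rw [show (-psiD (-zu)) - (-psiD (-zv)) = psiD (-zv) - psiD (-zu) by ring]
    exact h
  have hp1 : |Phi (-xu) - Phi (-xv)| ≤ 2 * |xu - xv| := by
    have h := phi_lip (-xu) (-xv)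
    rwa [show (-xu) - (-xv) = -(xu - xv) by ring, abs_neg] at h
  have hb3 : |Phi xu| ≤ 6 := phi_le _
  have hb4 : |psiD zv| ≤ 72 := abs_psiD_le _
  have hq2 : |psiD zu - psiD zv| ≤ 2880 * |zu - zv| := psiD_lip _ _
  have hp2 : |Phi xu - Phi xv| ≤ 2 * |xu - xv| := phi_lip _ _
  have m1 : |Phi (-xu)| * |(-psiD (-zu)) - (-psiD (-zv))| ≤ 6 * (2880 * |zu - zv|) :=
    mul_le_mul hb1 hq1 (abs_nonneg _) (by norm_num)
  have m2 : |(-psiD (-zv))| * |Phi (-xu) - Phi (-xv)| ≤ 72 * (2 * |xu - xv|) :=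
    mul_le_mul hb2 hp1 (abs_nonneg _) (by norm_num)
  have m3 : |Phi xu| * |psiD zu - psiD zv| ≤ 6 * (2880 * |zu - zv|) :=
    mul_le_mul hb3 hq2 (abs_nonneg _) (by norm_num)
  have m4 : |psiD zv| * |Phi xu - Phi xv| ≤ 72 * (2 * |xu - xv|) :=
    mul_le_mul hb4 hp2 (abs_nonneg _) (by norm_num)
  rw [e1]
  refine (abs_sub _ _).trans ?_
  linarith [t1, t2, m1, m2, m3, m4]

lemma Bj_diff (T : ℕ) (j : Fin (T - 1)) (u v : ET T) :
    |Bj T j u - Bj T j v| ≤ 288 * |u (Sum.inr j) - v (Sum.inr j)|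
      + 12 * |u (Sum.inl (ib T j)) - v (Sum.inl (ib T j))| := by
  set zu := u (Sum.inr j) with hzu
  set zv := v (Sum.inr j) with hzv
  set xu := u (Sum.inl (ib T j)) with hxu
  set xv := v (Sum.inl (ib T j)) with hxv
  have e1 : Bj T j u - Bj T j v
      = (Psi (-zu) * (-phiD (-xu)) - Psi (-zv) * (-phiD (-xv)))
        - (Psi zu * phiD xu - Psi zv * phiD xv) := by
    simp only [Bj]
    ring
  have t1 := abs_mul_sub_mul (Psi (-zu)) (Psi (-zv)) (-phiD (-xu)) (-phiD (-xv))
  have t2 := abs_mul_sub_mul (Psi zu) (Psi zv) (phiD xu) (phiD xv)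
  have hb1 : |Psi (-zu)| ≤ 3 := psi_le _
  have hb2 : |(-phiD (-xv))| ≤ 2 := by rw [abs_neg]; exact abs_phiD_le _
  have hq1 : |(-phiD (-xu)) - (-phiD (-xv))| ≤ 2 * |xu - xv| := by
    have h := phiD_lip (-xv) (-xu)
    rw [show (-xv) - (-xu) = xu - xv by ring] at h
    rw [show (-phiD (-xu)) - (-phiD (-xv)) = phiD (-xv) - phiD (-xu) by ring]
    exact h
  have hp1 : |Psi (-zu) - Psi (-zv)| ≤ 72 * |zu - zv| := by
    have h := psi_lip (-zu) (-zv)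
    rwa [show (-zu) - (-zv) = -(zu - zv) by ring, abs_neg] at h
  have hb3 : |Psi zu| ≤ 3 := psi_le _
  have hb4 : |phiD xv| ≤ 2 := abs_phiD_le _
  have hq2 : |phiD xu - phiD xv| ≤ 2 * |xu - xv| := phiD_lip _ _
  have hp2 : |Psi zu - Psi zv| ≤ 72 * |zu - zv| := psi_lip _ _
  have m1 : |Psi (-zu)| * |(-phiD (-xu)) - (-phiD (-xv))| ≤ 3 * (2 * |xu - xv|) :=
    mul_le_mul hb1 hq1 (abs_nonneg _) (by norm_num)
  have m2 : |(-phiD (-xv))| * |Psi (-zu) - Psi (-zv)| ≤ 2 * (72 * |zu - zv|) :=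
    mul_le_mul hb2 hp1 (abs_nonneg _) (by norm_num)
  have m3 : |Psi zu| * |phiD xu - phiD xv| ≤ 3 * (2 * |xu - xv|) :=
    mul_le_mul hb3 hq2 (abs_nonneg _) (by norm_num)
  have m4 : |phiD xv| * |Psi zu - Psi zv| ≤ 2 * (72 * |zu - zv|) :=
    mul_le_mul hb4 hp2 (abs_nonneg _) (by norm_num)
  rw [e1]
  refine (abs_sub _ _).trans ?_
  linarith [t1, t2, m1, m2, m3, m4]

end Stmt14

namespace Stmt14

lemma sub_apply' (T : ℕ) (u v : ET T) (i : Fin T ⊕ Fin (T - 1)) :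
    (u - v) i = u i - v i := rfl

lemma gradG_lip (T : ℕ) (hT : 2 ≤ T) (u v : ET T) :
    ‖gradG T hT u - gradG T hT v‖ ≤ 100000 * ‖u - v‖ := by
  classical
  have hsplit : gradG T hT u - gradG T hT v
      = EuclideanSpace.single (Sum.inl (i0 T hT))
          ((-Psi 1 * phiD (u (Sum.inl (i0 T hT)))) - (-Psi 1 * phiD (v (Sum.inl (i0 T hT)))))
        + (∑ j : Fin (T - 1),
            (EuclideanSpace.single (Sum.inl (ib T j)) (Bj T j u - Bj T j v)
              + EuclideanSpace.single (Sum.inr j) (Aj T j u - Aj T j v)))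
        + (6 : ℝ) • (∑ j : Fin (T - 1),
            (EuclideanSpace.single (Sum.inl (ia T j)) (2 * dj T j u - 2 * dj T j v)
              - EuclideanSpace.single (Sum.inr j) (dj T j u - dj T j v))) := by
    rw [gradG, gradG]
    have h0 : ∀ (a b c a' b' c' : ET T),
        (a + b + c) - (a' + b' + c') = (a - a') + (b - b') + (c - c') :=
      fun _ _ _ _ _ _ => by abel
    rw [h0]
    congr 1
    · congr 1
      · exact single_sub' _ _ _
      · rw [← Finset.sum_sub_distrib]
        refine Finset.sum_congr rfl fun j _ => ?_
        rw [← single_sub' (Sum.inl (ib T j)), ← single_sub' (Sum.inr j)]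
        abel
    · rw [← smul_sub, ← Finset.sum_sub_distrib]
      congr 1
      refine Finset.sum_congr rfl fun j _ => ?_
      rw [← single_sub' (Sum.inl (ia T j)), ← single_sub' (Sum.inr j)]
      abel
  rw [hsplit]
  have hDnn : (0:ℝ) ≤ ‖u - v‖ := norm_nonneg _
  -- part 1 bound
  have h1 : ‖(EuclideanSpace.single (Sum.inl (i0 T hT))
      ((-Psi 1 * phiD (u (Sum.inl (i0 T hT)))) - (-Psi 1 * phiD (v (Sum.inl (i0 T hT)))))
      : ET T)‖ ≤ 6 * ‖u - v‖ := by
    rw [EuclideanSpace.norm_single, Real.norm_eq_abs]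
    rw [show (-Psi 1 * phiD (u (Sum.inl (i0 T hT)))) - (-Psi 1 * phiD (v (Sum.inl (i0 T hT))))
        = (-Psi 1) * (phiD (u (Sum.inl (i0 T hT))) - phiD (v (Sum.inl (i0 T hT)))) from by ring,
      abs_mul, abs_neg]
    have hph : |phiD (u (Sum.inl (i0 T hT))) - phiD (v (Sum.inl (i0 T hT)))|
        ≤ 2 * |u (Sum.inl (i0 T hT)) - v (Sum.inl (i0 T hT))| := phiD_lip _ _
    have hco : |u (Sum.inl (i0 T hT)) - v (Sum.inl (i0 T hT))| ≤ ‖u - v‖ := by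
      have := coord_abs_le_norm (u - v) (Sum.inl (i0 T hT))
      rwa [sub_apply'] at this
    calc |Psi 1| * |phiD (u (Sum.inl (i0 T hT))) - phiD (v (Sum.inl (i0 T hT)))|
        ≤ 3 * (2 * ‖u - v‖) :=
          mul_le_mul (psi_le 1) (hph.trans (by linarith)) (abs_nonneg _) (by norm_num)
      _ = 6 * ‖u - v‖ := by ring
  -- part 2 bound
  have h2 : ‖∑ j : Fin (T - 1),
      (EuclideanSpace.single (Sum.inl (ib T j)) (Bj T j u - Bj T j v)
        + EuclideanSpace.single (Sum.inr j) (Aj T j u - Aj T j v))‖ ≤ 70000 * ‖u - v‖ := by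
    have horth : ∀ i j : Fin (T - 1), i ≠ j →
        (inner ℝ (EuclideanSpace.single (Sum.inl (ib T i)) (Bj T i u - Bj T i v)
            + EuclideanSpace.single (Sum.inr i) (Aj T i u - Aj T i v))
          (EuclideanSpace.single (Sum.inl (ib T j)) (Bj T j u - Bj T j v)
            + EuclideanSpace.single (Sum.inr j) (Aj T j u - Aj T j v)) : ℝ) = 0 := by
      intro i j hij
      have hne1 : (Sum.inl (ib T i) : Fin T ⊕ Fin (T - 1)) ≠ Sum.inl (ib T j) :=
        fun h => hij (inl_ib_inj T h)
      have hne2 : (Sum.inl (ib T i) : Fin T ⊕ Fin (T - 1)) ≠ Sum.inr j := by simp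
      have hne3 : (Sum.inr i : Fin T ⊕ Fin (T - 1)) ≠ Sum.inl (ib T j) := by simp
      have hne4 : (Sum.inr i : Fin T ⊕ Fin (T - 1)) ≠ Sum.inr j :=
        fun h => hij (Sum.inr_injective h)
      rw [inner_add_left, inner_add_right, inner_add_right,
        inner_single_single, inner_single_single, inner_single_single, inner_single_single,
        if_neg hne1, if_neg hne2, if_neg hne3, if_neg hne4]
      ring
    have hsq := norm_sq_sum_orthogonal
      (fun j : Fin (T - 1) => EuclideanSpace.single (Sum.inl (ib T j)) (Bj T j u - Bj T j v)
        + EuclideanSpace.single (Sum.inr j) (Aj T j u - Aj T j v)) horth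
    have hpj : ∀ j : Fin (T - 1),
        ‖EuclideanSpace.single (Sum.inl (ib T j)) (Bj T j u - Bj T j v)
          + EuclideanSpace.single (Sum.inr j) (Aj T j u - Aj T j v)‖ ^ 2
        = (Bj T j u - Bj T j v) ^ 2 + (Aj T j u - Aj T j v) ^ 2 := by
      intro j
      rw [norm_add_sq_real, inner_single_single, if_neg (by simp),
        EuclideanSpace.norm_single, EuclideanSpace.norm_single,
        Real.norm_eq_abs, Real.norm_eq_abs, sq_abs, sq_abs]
      ring
    have hbd : ∀ j : Fin (T - 1),
        (Bj T j u - Bj T j v) ^ 2 + (Aj T j u - Aj T j v) ^ 2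
        ≤ 2400000000 * ((u (Sum.inr j) - v (Sum.inr j)) ^ 2
            + (u (Sum.inl (ib T j)) - v (Sum.inl (ib T j))) ^ 2) := by
      intro j
      have hA := Aj_diff T j u v
      have hB := Bj_diff T j u v
      have hZnn : (0:ℝ) ≤ |u (Sum.inr j) - v (Sum.inr j)| := abs_nonneg _
      have hXnn : (0:ℝ) ≤ |u (Sum.inl (ib T j)) - v (Sum.inl (ib T j))| := abs_nonneg _
      have hA2 : (Aj T j u - Aj T j v) ^ 2
          ≤ (34560 * |u (Sum.inr j) - v (Sum.inr j)|
              + 288 * |u (Sum.inl (ib T j)) - v (Sum.inl (ib T j))|) ^ 2 := by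
        nlinarith [sq_abs (Aj T j u - Aj T j v), abs_nonneg (Aj T j u - Aj T j v),
          mul_self_le_mul_self (abs_nonneg (Aj T j u - Aj T j v)) hA]
      have hB2 : (Bj T j u - Bj T j v) ^ 2
          ≤ (288 * |u (Sum.inr j) - v (Sum.inr j)|
              + 12 * |u (Sum.inl (ib T j)) - v (Sum.inl (ib T j))|) ^ 2 := by
        nlinarith [sq_abs (Bj T j u - Bj T j v), abs_nonneg (Bj T j u - Bj T j v),
          mul_self_le_mul_self (abs_nonneg (Bj T j u - Bj T j v)) hB]
      have hZsq : |u (Sum.inr j) - v (Sum.inr j)| ^ 2 = (u (Sum.inr j) - v (Sum.inr j)) ^ 2 :=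
        sq_abs _
      have hXsq : |u (Sum.inl (ib T j)) - v (Sum.inl (ib T j))| ^ 2
          = (u (Sum.inl (ib T j)) - v (Sum.inl (ib T j))) ^ 2 := sq_abs _
      nlinarith [sq_nonneg (34560 * |u (Sum.inr j) - v (Sum.inr j)|
          - 288 * |u (Sum.inl (ib T j)) - v (Sum.inl (ib T j))|),
        sq_nonneg (288 * |u (Sum.inr j) - v (Sum.inr j)|
          - 12 * |u (Sum.inl (ib T j)) - v (Sum.inl (ib T j))|),
        mul_nonneg hZnn hXnn]
    have hzsum : ∑ j : Fin (T - 1), (u (Sum.inr j) - v (Sum.inr j)) ^ 2 ≤ ‖u - v‖ ^ 2 := by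
      have := sum_sq_comp_le (fun j : Fin (T - 1) => (Sum.inr j : Fin T ⊕ Fin (T - 1)))
        (fun a b h => Sum.inr_injective h) (u - v)
      simpa [sub_apply'] using this
    have hxsum : ∑ j : Fin (T - 1),
        (u (Sum.inl (ib T j)) - v (Sum.inl (ib T j))) ^ 2 ≤ ‖u - v‖ ^ 2 := by
      have := sum_sq_comp_le (fun j : Fin (T - 1) => (Sum.inl (ib T j) : Fin T ⊕ Fin (T - 1)))
        (inl_ib_inj T) (u - v)
      simpa [sub_apply'] using this
    have hfinal : ‖∑ j : Fin (T - 1),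
        (EuclideanSpace.single (Sum.inl (ib T j)) (Bj T j u - Bj T j v)
          + EuclideanSpace.single (Sum.inr j) (Aj T j u - Aj T j v))‖ ^ 2
        ≤ (70000 * ‖u - v‖) ^ 2 := by
      rw [hsq]
      calc ∑ j : Fin (T - 1), ‖EuclideanSpace.single (Sum.inl (ib T j)) (Bj T j u - Bj T j v)
            + EuclideanSpace.single (Sum.inr j) (Aj T j u - Aj T j v)‖ ^ 2
          = ∑ j : Fin (T - 1), ((Bj T j u - Bj T j v) ^ 2 + (Aj T j u - Aj T j v) ^ 2) :=
            Finset.sum_congr rfl fun j _ => hpj j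
        _ ≤ ∑ j : Fin (T - 1), 2400000000 * ((u (Sum.inr j) - v (Sum.inr j)) ^ 2
              + (u (Sum.inl (ib T j)) - v (Sum.inl (ib T j))) ^ 2) :=
            Finset.sum_le_sum fun j _ => hbd j
        _ = 2400000000 * ((∑ j : Fin (T - 1), (u (Sum.inr j) - v (Sum.inr j)) ^ 2)
              + ∑ j : Fin (T - 1), (u (Sum.inl (ib T j)) - v (Sum.inl (ib T j))) ^ 2) := by
            rw [← Finset.mul_sum, Finset.sum_add_distrib]
        _ ≤ 2400000000 * (‖u - v‖ ^ 2 + ‖u - v‖ ^ 2) := by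
            have := add_le_add hzsum hxsum
            nlinarith
        _ ≤ (70000 * ‖u - v‖) ^ 2 := by nlinarith [sq_nonneg ‖u - v‖]
    exact le_of_sq_le_sq' (norm_nonneg _) (by positivity) hfinal
  -- part 3 bound
  have h3 : ‖(6 : ℝ) • (∑ j : Fin (T - 1),
      (EuclideanSpace.single (Sum.inl (ia T j)) (2 * dj T j u - 2 * dj T j v)
        - EuclideanSpace.single (Sum.inr j) (dj T j u - dj T j v)))‖ ≤ 24 * ‖u - v‖ := by
    rw [norm_smul, Real.norm_eq_abs]
    have h6 : |(6:ℝ)| = 6 := by norm_num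
    rw [h6]
    have horth : ∀ i j : Fin (T - 1), i ≠ j →
        (inner ℝ (EuclideanSpace.single (Sum.inl (ia T i)) (2 * dj T i u - 2 * dj T i v)
            - EuclideanSpace.single (Sum.inr i) (dj T i u - dj T i v))
          (EuclideanSpace.single (Sum.inl (ia T j)) (2 * dj T j u - 2 * dj T j v)
            - EuclideanSpace.single (Sum.inr j) (dj T j u - dj T j v)) : ℝ) = 0 := by
      intro i j hij
      have hne1 : (Sum.inl (ia T i) : Fin T ⊕ Fin (T - 1)) ≠ Sum.inl (ia T j) :=
        fun h => hij (inl_ia_inj T h)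
      have hne2 : (Sum.inl (ia T i) : Fin T ⊕ Fin (T - 1)) ≠ Sum.inr j := by simp
      have hne3 : (Sum.inr i : Fin T ⊕ Fin (T - 1)) ≠ Sum.inl (ia T j) := by simp
      have hne4 : (Sum.inr i : Fin T ⊕ Fin (T - 1)) ≠ Sum.inr j :=
        fun h => hij (Sum.inr_injective h)
      rw [inner_sub_left, inner_sub_right, inner_sub_right,
        inner_single_single, inner_single_single, inner_single_single, inner_single_single,
        if_neg hne1, if_neg hne2, if_neg hne3, if_neg hne4]
      ring
    have hsq := norm_sq_sum_orthogonal
      (fun j : Fin (T - 1) => EuclideanSpace.single (Sum.inl (ia T j)) (2 * dj T j u - 2 * dj T j v)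
        - EuclideanSpace.single (Sum.inr j) (dj T j u - dj T j v)) horth
    have hpj : ∀ j : Fin (T - 1),
        ‖EuclideanSpace.single (Sum.inl (ia T j)) (2 * dj T j u - 2 * dj T j v)
          - EuclideanSpace.single (Sum.inr j) (dj T j u - dj T j v)‖ ^ 2
        = 5 * (dj T j u - dj T j v) ^ 2 := by
      intro j
      rw [norm_sub_sq_real, inner_single_single, if_neg (by simp),
        EuclideanSpace.norm_single, EuclideanSpace.norm_single,
        Real.norm_eq_abs, Real.norm_eq_abs, sq_abs, sq_abs]
      ring
    have hbd : ∀ j : Fin (T - 1), 5 * (dj T j u - dj T j v) ^ 2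
        ≤ 10 * (u (Sum.inl (ia T j)) - v (Sum.inl (ia T j))) ^ 2
          + 5 / 2 * (u (Sum.inr j) - v (Sum.inr j)) ^ 2 := by
      intro j
      have e : dj T j u - dj T j v = (u (Sum.inl (ia T j)) - v (Sum.inl (ia T j)))
          - 1 / 2 * (u (Sum.inr j) - v (Sum.inr j)) := by
        simp only [dj]; ring
      rw [e]
      nlinarith [sq_nonneg ((u (Sum.inl (ia T j)) - v (Sum.inl (ia T j)))
        + 1 / 2 * (u (Sum.inr j) - v (Sum.inr j)))]
    have hasum : ∑ j : Fin (T - 1),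
        (u (Sum.inl (ia T j)) - v (Sum.inl (ia T j))) ^ 2 ≤ ‖u - v‖ ^ 2 := by
      have := sum_sq_comp_le (fun j : Fin (T - 1) => (Sum.inl (ia T j) : Fin T ⊕ Fin (T - 1)))
        (inl_ia_inj T) (u - v)
      simpa [sub_apply'] using this
    have hzsum : ∑ j : Fin (T - 1), (u (Sum.inr j) - v (Sum.inr j)) ^ 2 ≤ ‖u - v‖ ^ 2 := by
      have := sum_sq_comp_le (fun j : Fin (T - 1) => (Sum.inr j : Fin T ⊕ Fin (T - 1)))
        (fun a b h => Sum.inr_injective h) (u - v)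
      simpa [sub_apply'] using this
    have hfinal : ‖∑ j : Fin (T - 1),
        (EuclideanSpace.single (Sum.inl (ia T j)) (2 * dj T j u - 2 * dj T j v)
          - EuclideanSpace.single (Sum.inr j) (dj T j u - dj T j v))‖ ^ 2
        ≤ (4 * ‖u - v‖) ^ 2 := by
      rw [hsq]
      calc ∑ j : Fin (T - 1), ‖EuclideanSpace.single (Sum.inl (ia T j))
            (2 * dj T j u - 2 * dj T j v)
            - EuclideanSpace.single (Sum.inr j) (dj T j u - dj T j v)‖ ^ 2
          = ∑ j : Fin (T - 1), 5 * (dj T j u - dj T j v) ^ 2 :=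
            Finset.sum_congr rfl fun j _ => hpj j
        _ ≤ ∑ j : Fin (T - 1), (10 * (u (Sum.inl (ia T j)) - v (Sum.inl (ia T j))) ^ 2
              + 5 / 2 * (u (Sum.inr j) - v (Sum.inr j)) ^ 2) :=
            Finset.sum_le_sum fun j _ => hbd j
        _ = 10 * (∑ j : Fin (T - 1), (u (Sum.inl (ia T j)) - v (Sum.inl (ia T j))) ^ 2)
              + 5 / 2 * ∑ j : Fin (T - 1), (u (Sum.inr j) - v (Sum.inr j)) ^ 2 := by
            rw [Finset.sum_add_distrib, ← Finset.mul_sum, ← Finset.mul_sum]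
        _ ≤ 10 * ‖u - v‖ ^ 2 + 5 / 2 * ‖u - v‖ ^ 2 := by nlinarith
        _ ≤ (4 * ‖u - v‖) ^ 2 := by nlinarith [sq_nonneg ‖u - v‖]
    have h4 : ‖∑ j : Fin (T - 1),
        (EuclideanSpace.single (Sum.inl (ia T j)) (2 * dj T j u - 2 * dj T j v)
          - EuclideanSpace.single (Sum.inr j) (dj T j u - dj T j v))‖ ≤ 4 * ‖u - v‖ :=
      le_of_sq_le_sq' (norm_nonneg _) (by positivity) hfinal
    linarith
  refine le_trans norm_add₃_le ?_
  linarith [h1, h2, h3]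

end Stmt14

/-- there is a numerical constant `ℓ_m ≥ 1`, independent of `T`, such that
`f̄_m` is `ℓ_m`-smooth: its gradient is `ℓ_m`-Lipschitz in Euclidean norm. -/
theorem stmt_14 :
    ∃ ℓm : ℝ, 1 ≤ ℓm ∧
      ∀ (T : ℕ) (hT : 2 ≤ T) (u v : EuclideanSpace ℝ (Fin T ⊕ Fin (T - 1))),
        ‖gradient (fmE T hT) u - gradient (fmE T hT) v‖ ≤ ℓm * ‖u - v‖ := by
  refine ⟨100000, by norm_num, ?_⟩
  intro T hT u v
  rw [(Stmt14.hasGradientAt_fmE T hT u).gradient, (Stmt14.hasGradientAt_fmE T hT v).gradient]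
  exact Stmt14.gradG_lip T hT u v
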